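/- Let p be an odd prime and let a be an integer with 1 ≤ a ≤ p−1. Then binomial(p−1, a) ≡ (−1)^a · (1 − p·H_a) (mod p²) as rational numbers. -/

import Mathlib

open Finset

/-- `x ≡ y (mod p^k)` for rationals: `x - y = p^k * (c/d)` with `p ∤ d`. -/
def ratCongr (p k : ℕ) (x y : ℚ) : Prop :=
  ∃ c d : ℤ, ¬ (p : ℤ) ∣ d ∧ x - y = (p : ℚ) ^ k * ((c : ℚ) / (d : ℚ))

/-- The Wilson quotient `W_p = ((p-1)! + 1)/p` (an integer by Wilson's theorem). -/
def wilsonQuotient (p : ℕ) : ℤ := ((Nat.factorial (p - 1) : ℤ) + 1) / p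

/-- The Fermat quotient `q_p(a) = (a^(p-1) - 1)/p` (an integer for `p ∤ a`). -/
def fermatQuotient (p a : ℕ) : ℤ := ((a : ℤ) ^ (p - 1) - 1) / p

/-- A prime `p` is a Wilson prime if `p ∣ W_p`. -/
def IsWilsonPrime (p : ℕ) : Prop := (p : ℤ) ∣ wilsonQuotient p

/-- A prime `p` is a Lerch prime if `∑_{a=1}^{p-1} q_p(a) ≡ W_p (mod p²)`. -/
def IsLerchPrime (p : ℕ) : Prop :=
  (p : ℤ) ^ 2 ∣ (∑ a ∈ Icc 1 (p - 1), fermatQuotient p a) - wilsonQuotient p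

/-- The harmonic number `H_a = ∑_{k=1}^{a} 1/k`. -/
def harmonicNum (a : ℕ) : ℚ := ∑ k ∈ Icc 1 a, (1 : ℚ) / k

/-- The generalized harmonic number `H_{a,2} = ∑_{k=1}^{a} 1/k²`. -/
def harmonicNum2 (a : ℕ) : ℚ := ∑ k ∈ Icc 1 a, (1 : ℚ) / (k : ℚ) ^ 2

lemma harmonicNum_succ (n : ℕ) :
    harmonicNum (n + 1) = harmonicNum n + 1 / ((n : ℚ) + 1) := by
  unfold harmonicNum
  rw [Finset.sum_Icc_succ_top (by omega : 1 ≤ n + 1)]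
  push_cast
  ring

lemma harm_int (a : ℕ) : ∃ u : ℤ, harmonicNum a * (a.factorial : ℚ) = u := by
  induction a with
  | zero => exact ⟨0, by simp [harmonicNum]⟩
  | succ n ih =>
    obtain ⟨u, hu⟩ := ih
    refine ⟨u * (n + 1) + n.factorial, ?_⟩
    rw [harmonicNum_succ, Nat.factorial_succ]
    have hn1 : ((n : ℚ) + 1) ≠ 0 := by positivity
    push_cast
    field_simp
    linear_combination ((n : ℚ) + 1) * hu

theorem stmt_12 (p : ℕ) (hp : p.Prime) (hodd : Odd p) (a : ℕ)
    (ha1 : 1 ≤ a) (ha2 : a ≤ p - 1) :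
    ratCongr p 2 (((p - 1).choose a : ℚ))
      ((-1) ^ a * (1 - (p : ℚ) * harmonicNum a)) := by
  have hp2 : 2 ≤ p := hp.two_le
  induction a, ha1 using Nat.le_induction with
  | base =>
    refine ⟨0, 1, ?_, ?_⟩
    · intro h
      have := Int.le_of_dvd one_pos h
      omega
    have h1 : (p - 1).choose 1 = p - 1 := Nat.choose_one_right _
    have : harmonicNum 1 = 1 := by simp [harmonicNum]
    rw [h1, this]
    have : ((p - 1 : ℕ) : ℚ) = (p : ℚ) - 1 := by
      push_cast [Nat.cast_sub (by omega : 1 ≤ p)]; ring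
    rw [this]
    ring
  | succ n hn ih =>
    have hnp : n ≤ p - 1 := by omega
    obtain ⟨c, d, hd, hcd⟩ := ih hnp
    obtain ⟨u, hu⟩ := harm_int n
    refine ⟨c * ((p : ℤ) - (n + 1)) * n.factorial + (-1) ^ (n + 1) * u * d,
      d * (n + 1) * n.factorial, ?_, ?_⟩
    · intro h
      rcases (Int.Prime.dvd_mul' (by exact_mod_cast hp) h) with h | h
      rcases (Int.Prime.dvd_mul' (by exact_mod_cast hp) h) with h | h
      · exact hd h
      · have : p ∣ n + 1 := by exact_mod_cast h
        have := Nat.le_of_dvd (by omega) this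
        omega
      · have : p ∣ n.factorial := by exact_mod_cast h
        have := (Nat.Prime.dvd_factorial hp).mp this
        omega
    · have hE1 : ((p - 1).choose (n + 1) : ℚ) * (n + 1) =
          ((p - 1).choose n : ℚ) * ((p : ℚ) - (n + 1)) := by
        have := Nat.choose_succ_right_eq (p - 1) n
        have hcast : ((p - 1 - n : ℕ) : ℚ) = (p : ℚ) - (n + 1) := by
          rw [Nat.cast_sub (by omega), Nat.cast_sub (by omega)]
          push_cast; ring
        have h2 : (((p - 1).choose (n + 1) * (n + 1) : ℕ) : ℚ)
            = (((p - 1).choose n * (p - 1 - n) : ℕ) : ℚ) := by exact_mod_cast this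
        push_cast at h2
        rw [hcast] at h2
        · push_cast; linarith [h2]
      rw [harmonicNum_succ]
      have hd0 : (d : ℚ) ≠ 0 := by
        intro h
        have hz : d = 0 := by exact_mod_cast h
        exact hd (hz ▸ dvd_zero _)
      have hn1 : ((n : ℚ) + 1) ≠ 0 := by positivity
      have hf0 : ((n.factorial : ℚ)) ≠ 0 := by
        exact_mod_cast n.factorial_ne_zero
      have hC0 : ((p - 1).choose n : ℚ)
          = (-1) ^ n * (1 - (p : ℚ) * harmonicNum n) + (p : ℚ) ^ 2 * (c / d) := by
        linarith [hcd]
      have hH : harmonicNum n = (u : ℚ) / n.factorial := by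
        field_simp at hu ⊢; linarith [hu]
      have hC1 : ((p - 1).choose (n + 1) : ℚ) =
          ((p - 1).choose n : ℚ) * ((p : ℚ) - (n + 1)) / ((n : ℚ) + 1) := by
        field_simp
        push_cast at hE1 ⊢
        linarith [hE1]
      rw [hC1, hC0, hH]
      push_cast
      field_simp
      ring
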